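/- Let φ = (1+√5)/2. Then L(−1/φ) = −π²/15 and L(−φ) = −π²/10, where L is the extended Rogers L-function. -/

import Mathlib

open Real

noncomputable def Li2 (x : ℝ) : ℝ := -∫ t in (0:ℝ)..x, Real.log (1 - t) / t

noncomputable def rogersL (x : ℝ) : ℝ :=
  Li2 x + (1/2) * Real.log |x| * Real.log (1 - x)

open MeasureTheory Set Filter intervalIntegral

noncomputable def gg (t : ℝ) : ℝ := if t = 0 then -1 else Real.log (1 - t) / t

lemma continuousAt_gg {x : ℝ} (hx : x < 1) : ContinuousAt gg x := by
  rcases eq_or_ne x 0 with rfl | hx0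
  · have h : HasDerivAt (fun t : ℝ => Real.log (1 - t)) (-1) 0 := by
      have h1 : HasDerivAt (fun t : ℝ => 1 - t) (-1) 0 := by
        simpa using (hasDerivAt_id (0:ℝ)).const_sub 1
      have h2 := (Real.hasDerivAt_log (by norm_num : (1:ℝ) - 0 ≠ 0)).comp 0 h1
      exact h2.congr_deriv (by norm_num)
    have hs := hasDerivAt_iff_tendsto_slope.mp h
    have heq : ∀ t : ℝ, t ≠ 0 → slope (fun t : ℝ => Real.log (1 - t)) 0 t = gg t := by
      intro t ht
      simp [slope_def_field, gg, ht, div_eq_div_iff]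
    rw [ContinuousAt]
    have : gg 0 = -1 := by simp [gg]
    rw [this]
    rw [← nhdsNE_sup_pure (0:ℝ), tendsto_sup]
    constructor
    · refine hs.congr' ?_
      filter_upwards [self_mem_nhdsWithin] with t ht
      exact heq t ht
    · simpa [gg] using tendsto_pure_nhds gg 0 |>.congr (fun _ => rfl) |>.mono_right le_rfl
  · have hc : ContinuousAt (fun t : ℝ => Real.log (1 - t) / t) x := by
      exact ((Real.continuousAt_log (by linarith [sub_ne_zero.mpr (ne_of_gt hx)] : (1:ℝ) - x ≠ 0)).comp
        ((continuous_const.sub continuous_id).continuousAt)).div continuousAt_id hx0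
    refine hc.congr ?_
    filter_upwards [eventually_ne_nhds hx0] with t ht
    simp [gg, ht]

lemma continuousOn_gg : ContinuousOn gg (Iio 1) :=
  fun x hx => (continuousAt_gg hx).continuousWithinAt

lemma intervalIntegrable_gg {a b : ℝ} (ha : a < 1) (hb : b < 1) :
    IntervalIntegrable gg volume a b := by
  apply (continuousOn_gg.mono ?_).intervalIntegrable
  intro t ht
  have h2 : t ≤ max a b := ht.2
  exact lt_of_le_of_lt h2 (max_lt ha hb)

lemma Li2_eq {x : ℝ} : Li2 x = -∫ t in (0:ℝ)..x, gg t := by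
  unfold Li2
  congr 1
  apply intervalIntegral.integral_congr_ae
  have h0 : (volume : Measure ℝ) {0} = 0 := measure_singleton 0
  filter_upwards [measure_eq_zero_iff_ae_notMem.mp h0] with t ht _
  have : t ≠ 0 := ht
  simp [gg, this]

lemma Li2_zero : Li2 0 = 0 := by simp [Li2]

lemma Li2_hasDerivAt {x : ℝ} (hx : x < 1) : HasDerivAt Li2 (-(gg x)) x := by
  have key : HasDerivAt (fun u => ∫ t in (0:ℝ)..u, gg t) (gg x) x :=
    intervalIntegral.integral_hasDerivAt_right (intervalIntegrable_gg one_pos hx)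
      (continuousOn_gg.stronglyMeasurableAtFilter isOpen_Iio x hx)
      (continuousAt_gg hx)
  have : Li2 =ᶠ[nhds x] (fun u => -∫ t in (0:ℝ)..u, gg t) := by
    filter_upwards with u using Li2_eq
  exact (key.neg).congr_of_eventuallyEq this

lemma gg_ne_zero {x : ℝ} (hx : x ≠ 0) : gg x = Real.log (1 - x) / x := by simp [gg, hx]

lemma eq_of_hasDerivAt_zero {F : ℝ → ℝ} {s : Set ℝ} (hs : Convex ℝ s)
    (h : ∀ z ∈ s, HasDerivAt F 0 z) : ∀ x ∈ s, ∀ y ∈ s, F x = F y := by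
  have key : ∀ x ∈ s, ∀ y ∈ s, x ≤ y → F y = F x := by
    intro x hx y hy hxy
    have hsub : Icc x y ⊆ s := hs.ordConnected.out hx hy
    exact constant_of_has_deriv_right_zero
      (fun z hz => ((h z (hsub hz)).continuousAt.continuousWithinAt))
      (fun z hz => (h z (hsub ⟨hz.1, hz.2.le⟩)).hasDerivWithinAt) y (right_mem_Icc.mpr hxy)
  intro x hx y hy
  rcases le_total x y with hxy | hxy
  · exact (key x hx y hy hxy).symm
  · exact key y hy x hx hxy

/-- Landen's identity valid for all x < 1 -/
lemma landen {x : ℝ} (hx : x < 1) :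
    Li2 x + Li2 (x / (x - 1)) + (1/2) * (Real.log (1 - x))^2 = 0 := by
  have hderiv : ∀ z ∈ Iio (1:ℝ),
      HasDerivAt (fun x => Li2 x + Li2 (x / (x - 1)) + (1/2) * (Real.log (1 - x))^2) 0 z := by
    intro z hz
    have hzlt : z < 1 := hz
    have hz1 : z - 1 ≠ 0 := sub_ne_zero.mpr (ne_of_lt hzlt)
    have hz1' : (0:ℝ) < 1 - z := by linarith
    have hu_lt : z / (z - 1) < 1 := by
      have he : z / (z - 1) - 1 = 1 / (z - 1) := by field_simp; ring
      have : (1:ℝ) / (z - 1) < 0 := div_neg_of_pos_of_neg one_pos (by linarith)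
      linarith [he ▸ this]
    have hU : HasDerivAt (fun x : ℝ => x / (x - 1)) (-1 / (z - 1)^2) z := by
      have := (hasDerivAt_id z).div ((hasDerivAt_id z).sub_const 1) hz1
      exact this.congr_deriv (by simp only [id]; field_simp; ring)
    have h1 : HasDerivAt Li2 (-(gg z)) z := Li2_hasDerivAt hzlt
    have h2 : HasDerivAt (fun x : ℝ => Li2 (x / (x - 1)))
        ((-(gg (z / (z-1)))) * (-1 / (z - 1)^2)) z :=
      HasDerivAt.comp (h := fun x : ℝ => x / (x - 1)) z (Li2_hasDerivAt hu_lt) hU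
    have hl : HasDerivAt (fun x : ℝ => Real.log (1 - x)) (-(1-z)⁻¹) z := by
      have hsub : HasDerivAt (fun x : ℝ => 1 - x) (-1) z := by
        simpa using (hasDerivAt_id z).const_sub 1
      exact ((Real.hasDerivAt_log (ne_of_gt hz1')).comp z hsub).congr_deriv (by ring)
    have h3 : HasDerivAt (fun x : ℝ => (1/2) * (Real.log (1 - x))^2)
        (Real.log (1 - z) / (z - 1)) z := by
      have h2' := (hl.mul hl).const_mul (1/2 : ℝ)
      have h3' : HasDerivAt (fun x : ℝ => (1/2) * (Real.log (1 - x) * Real.log (1 - x)))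
          (Real.log (1 - z) / (z - 1)) z := by
        refine h2'.congr_deriv ?_
        rw [show z - 1 = -(1 - z) by ring, div_neg]
        ring
      simpa [pow_two] using h3'
    have hsum := (h1.add h2).add h3
    have hzero : -(gg z) + (-(gg (z / (z-1)))) * (-1 / (z - 1)^2)
        + Real.log (1 - z) / (z - 1) = 0 := by
      rcases eq_or_ne z 0 with rfl | hz0
      · norm_num [gg]
      · have hu0 : z / (z - 1) ≠ 0 := div_ne_zero hz0 hz1
        rw [gg_ne_zero hz0, gg_ne_zero hu0]
        have h1u : 1 - z / (z - 1) = (1-z)⁻¹ := by field_simp; ring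
        rw [h1u, Real.log_inv]
        field_simp
        ring
    exact hsum.congr_deriv hzero
  have h := eq_of_hasDerivAt_zero (convex_Iio 1) hderiv x hx 0 (by norm_num)
  simpa [Li2_zero] using h

lemma duplication {x : ℝ} (hx : x ∈ Ioo (-1:ℝ) 1) :
    Li2 (x^2) = 2 * (Li2 x + Li2 (-x)) := by
  have hderiv : ∀ z ∈ Ioo (-1:ℝ) 1,
      HasDerivAt (fun x => Li2 (x^2) - 2*Li2 x - 2*Li2 (-x)) 0 z := by
    intro z hz
    have hz1 : -1 < z := hz.1
    have hz2 : z < 1 := hz.2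
    have hsq : z^2 < 1 := by nlinarith
    have hU : HasDerivAt (fun x : ℝ => x^2) (2*z) z := by
      simpa using hasDerivAt_pow 2 z
    have h1 : HasDerivAt (fun x : ℝ => Li2 (x^2)) ((-(gg (z^2))) * (2*z)) z :=
      HasDerivAt.comp (h := fun x : ℝ => x^2) z (Li2_hasDerivAt hsq) hU
    have h2 : HasDerivAt (fun x : ℝ => 2 * Li2 x) (2 * (-(gg z))) z :=
      (Li2_hasDerivAt hz2).const_mul 2
    have hneg : HasDerivAt (fun x : ℝ => Li2 (-x)) ((-(gg (-z))) * (-1)) z :=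
      (Li2_hasDerivAt (by linarith)).comp z (hasDerivAt_neg z)
    have h3 : HasDerivAt (fun x : ℝ => 2 * Li2 (-x)) (2 * ((-(gg (-z))) * (-1))) z :=
      hneg.const_mul 2
    have hsum := (h1.sub h2).sub h3
    refine hsum.congr_deriv ?_
    rcases eq_or_ne z 0 with rfl | hz0
    · norm_num [gg]
    · rw [gg_ne_zero hz0, gg_ne_zero (neg_ne_zero.mpr hz0), gg_ne_zero (pow_ne_zero 2 hz0)]
      have hfac : 1 - z^2 = (1-z)*(1+z) := by ring
      rw [hfac, Real.log_mul (by linarith) (by linarith)]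
      have hnn : (1:ℝ) - -z = 1 + z := by ring
      rw [hnn]
      field_simp
      ring
  have h := eq_of_hasDerivAt_zero (convex_Ioo (-1) 1) hderiv x hx 0 ⟨by norm_num, by norm_num⟩
  simp only [ne_eq, OfNat.ofNat_ne_zero, not_false_eq_true, zero_pow, neg_zero, Li2_zero,
    mul_zero, sub_zero, zero_sub] at h
  linarith

lemma reflection_aux : ∀ x ∈ Ioo (0:ℝ) 1, ∀ y ∈ Ioo (0:ℝ) 1,
    Li2 x + Li2 (1-x) + Real.log x * Real.log (1-x) =
    Li2 y + Li2 (1-y) + Real.log y * Real.log (1-y) := by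
  apply eq_of_hasDerivAt_zero (convex_Ioo 0 1)
  intro z hz
  have hz1 : 0 < z := hz.1
  have hz2 : z < 1 := hz.2
  have h1 : HasDerivAt Li2 (-(gg z)) z := Li2_hasDerivAt hz2
  have h2 : HasDerivAt (fun x : ℝ => Li2 (1-x)) ((-(gg (1-z))) * (-1)) z :=
    (Li2_hasDerivAt (by linarith)).comp z (by simpa using (hasDerivAt_id z).const_sub 1)
  have hlog1 : HasDerivAt Real.log z⁻¹ z := Real.hasDerivAt_log (ne_of_gt hz1)
  have hlog2 : HasDerivAt (fun x : ℝ => Real.log (1-x)) (-(1-z)⁻¹) z := by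
    have hsub : HasDerivAt (fun x : ℝ => 1 - x) (-1) z := by
      simpa using (hasDerivAt_id z).const_sub 1
    exact
      ((Real.hasDerivAt_log (by linarith : (1:ℝ)-z ≠ 0)).comp z hsub).congr_deriv (by ring)
  have h3 := hlog1.mul hlog2
  have hsum := (h1.add h2).add h3
  refine hsum.congr_deriv ?_
  rw [gg_ne_zero (ne_of_gt hz1), gg_ne_zero (by linarith : (1:ℝ)-z ≠ 0)]
  have hid : (1:ℝ) - (1-z) = z := by ring
  rw [hid]
  field_simp
  ring

lemma summable_base : Summable (fun n : ℕ => 1/((n:ℝ)+1)^2) := by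
  have h := (summable_nat_add_iff 1).mpr (Real.summable_one_div_nat_pow.mpr one_lt_two)
  apply h.congr
  intro n
  push_cast
  ring

lemma summable_aux {x : ℝ} (h0 : 0 ≤ x) (h1 : x ≤ 1) :
    Summable (fun n : ℕ => x^(n+1)/((n:ℝ)+1)^2) := by
  apply Summable.of_nonneg_of_le (fun n => by positivity) (fun n => ?_) summable_base
  gcongr
  exact pow_le_one₀ h0 h1

lemma Li2_series {x : ℝ} (hx0 : 0 < x) (hx1 : x ≤ 1) :
    Li2 x = ∑' n : ℕ, x^(n+1)/((n:ℝ)+1)^2 := by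
  have hmeas : Measurable (fun t : ℝ => -(Real.log (1 - t) / t)) :=
    ((Real.measurable_log.comp (measurable_const.sub measurable_id)).div measurable_id).neg
  have h1 : Li2 x = ∫ t in Ioc (0:ℝ) x, -(Real.log (1-t)/t) := by
    unfold Li2
    rw [← intervalIntegral.integral_neg, intervalIntegral.integral_of_le hx0.le]
  have hnn : ∀ t, t ∈ Ioc (0:ℝ) x → 0 ≤ -(Real.log (1-t)/t) := by
    intro t ht
    have hlog : Real.log (1 - t) ≤ 0 :=
      Real.log_nonpos (by linarith [ht.2, hx1]) (by linarith [ht.1])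
    have := div_nonpos_of_nonpos_of_nonneg hlog ht.1.le
    linarith
  have h2 : ∫ t in Ioc (0:ℝ) x, -(Real.log (1-t)/t)
      = (∫⁻ t in Ioc (0:ℝ) x, ENNReal.ofReal (-(Real.log (1-t)/t))).toReal := by
    apply integral_eq_lintegral_of_nonneg_ae
    · show ∀ᵐ t ∂(volume.restrict (Ioc (0:ℝ) x)), 0 ≤ -(Real.log (1-t)/t)
      rw [ae_restrict_iff' measurableSet_Ioc]
      filter_upwards with t ht using hnn t ht
    · exact hmeas.aestronglyMeasurable
  have h3 : ∫⁻ t in Ioc (0:ℝ) x, ENNReal.ofReal (-(Real.log (1-t)/t))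
      = ∫⁻ t in Ioo (0:ℝ) x, ENNReal.ofReal (-(Real.log (1-t)/t)) := by
    rw [Measure.restrict_congr_set Ioo_ae_eq_Ioc]
  have h4 : ∫⁻ t in Ioo (0:ℝ) x, ENNReal.ofReal (-(Real.log (1-t)/t))
      = ∫⁻ t in Ioo (0:ℝ) x, ∑' n:ℕ, ENNReal.ofReal (t^n/((n:ℝ)+1)) := by
    apply setLIntegral_congr_fun measurableSet_Ioo
    intro t ht
    have ht1 : t < 1 := lt_of_lt_of_le ht.2 hx1
    have ht0 : 0 < t := ht.1
    have hlog : HasSum (fun n : ℕ => t^(n+1)/((n:ℝ)+1)) (-Real.log (1-t)) :=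
      hasSum_pow_div_log_of_abs_lt_one (by rw [abs_of_pos ht0]; exact ht1)
    have hdiv : HasSum (fun n : ℕ => t^n/((n:ℝ)+1)) (-(Real.log (1-t)/t)) := by
      have hd := hlog.div_const t
      rw [neg_div] at hd
      have htne : t ≠ 0 := ne_of_gt ht0
      have hfun : (fun i : ℕ => t^(i+1)/((i:ℝ)+1)/t) = fun n : ℕ => t^n/((n:ℝ)+1) := by
        funext n
        rw [pow_succ]
        field_simp
      rwa [hfun] at hd
    beta_reduce
    rw [← hdiv.tsum_eq, ENNReal.ofReal_tsum_of_nonneg (fun n => by positivity) hdiv.summable]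
  have h5 : ∫⁻ t in Ioo (0:ℝ) x, ∑' n:ℕ, ENNReal.ofReal (t^n/((n:ℝ)+1))
      = ∑' n:ℕ, ∫⁻ t in Ioo (0:ℝ) x, ENNReal.ofReal (t^n/((n:ℝ)+1)) :=
    lintegral_tsum (fun n => (ENNReal.measurable_ofReal.comp
      ((measurable_id.pow_const n).div_const _)).aemeasurable)
  have h6 : ∀ n:ℕ, ∫⁻ t in Ioo (0:ℝ) x, ENNReal.ofReal (t^n/((n:ℝ)+1))
      = ENNReal.ofReal (x^(n+1)/((n:ℝ)+1)^2) := by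
    intro n
    rw [← MeasureTheory.ofReal_integral_eq_lintegral_ofReal]
    · congr 1
      rw [Measure.restrict_congr_set Ioo_ae_eq_Ioc,
        ← intervalIntegral.integral_of_le hx0.le,
        intervalIntegral.integral_div, integral_pow]
      field_simp
      ring
    · exact (ContinuousOn.integrableOn_compact isCompact_Icc
        (((continuous_id.pow n).div_const _).continuousOn)).mono_set Ioo_subset_Icc_self
    · show ∀ᵐ t ∂(volume.restrict (Ioo (0:ℝ) x)), 0 ≤ t^n/((n:ℝ)+1)
      rw [ae_restrict_iff' measurableSet_Ioo]
      filter_upwards with t ht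
      have := ht.1
      positivity
  rw [h1, h2, h3, h4, h5]
  simp_rw [h6]
  rw [← ENNReal.ofReal_tsum_of_nonneg (fun n => by positivity) (summable_aux hx0.le hx1),
    ENNReal.toReal_ofReal (tsum_nonneg (fun n => by positivity))]

lemma hasSum_shift : HasSum (fun n : ℕ => 1/((n:ℝ)+1)^2) (π^2/6) := by
  have h := hasSum_zeta_two
  rw [← hasSum_nat_add_iff' 1] at h
  simp only [Finset.range_one, Finset.sum_singleton, Nat.cast_zero] at h
  norm_num at h
  simpa [one_div] using h

lemma Li2_one : Li2 1 = π^2/6 := by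
  rw [Li2_series one_pos le_rfl]
  simp only [one_pow]
  exact hasSum_shift.tsum_eq

lemma tendsto_Li2_one : Tendsto Li2 (nhdsWithin 1 (Iio 1)) (nhds (π^2/6)) := by
  have key : Tendsto (fun x : ℝ => ∑' n : ℕ, x^(n+1)/((n:ℝ)+1)^2)
      (nhdsWithin 1 (Iio 1)) (nhds (∑' n : ℕ, 1/((n:ℝ)+1)^2)) := by
    apply tendsto_tsum_of_dominated_convergence summable_base
    · intro k
      have hc : ContinuousAt (fun x : ℝ => x^(k+1)/((k:ℝ)+1)^2) 1 :=
        (continuous_pow (k+1)).continuousAt.div_const _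
      have := hc.tendsto
      rw [show (1:ℝ)^(k+1)/((k:ℝ)+1)^2 = 1/((k:ℝ)+1)^2 by norm_num] at this
      exact this.mono_left nhdsWithin_le_nhds
    · filter_upwards [Ioo_mem_nhdsLT_of_mem (⟨by norm_num, le_rfl⟩ : (1:ℝ) ∈ Ioc 0 1)]
        with x hx k
      have hx0 : (0:ℝ) ≤ x := hx.1.le
      rw [Real.norm_eq_abs, abs_of_nonneg (by positivity : (0:ℝ) ≤ x^(k+1)/((k:ℝ)+1)^2)]
      gcongr
      exact pow_le_one₀ hx0 hx.2.le
  rw [hasSum_shift.tsum_eq] at key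
  apply key.congr'
  filter_upwards [Ioo_mem_nhdsLT_of_mem (⟨by norm_num, le_rfl⟩ : (1:ℝ) ∈ Ioc 0 1)] with x hx
  exact (Li2_series hx.1 hx.2.le).symm

lemma reflection_eq {x : ℝ} (hx : x ∈ Ioo (0:ℝ) 1) :
    Li2 x + Li2 (1-x) + Real.log x * Real.log (1-x) = π^2/6 := by
  have hmem : (1:ℝ) ∈ Ioc (0:ℝ) 1 := ⟨by norm_num, le_rfl⟩
  -- limit of first term
  have hA : Tendsto Li2 (nhdsWithin 1 (Iio 1)) (nhds (π^2/6)) := tendsto_Li2_one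
  -- limit of second term
  have hB : Tendsto (fun y : ℝ => Li2 (1-y)) (nhdsWithin 1 (Iio 1)) (nhds 0) := by
    have hc : ContinuousAt Li2 0 := (Li2_hasDerivAt (by norm_num)).continuousAt
    have hm : Tendsto (fun y : ℝ => 1-y) (nhdsWithin 1 (Iio 1)) (nhds 0) := by
      have h := ((continuous_const (y := (1:ℝ))).sub continuous_id).tendsto (1:ℝ)
      simp only [Pi.sub_apply, id_eq, sub_self] at h
      exact h.mono_left nhdsWithin_le_nhds
    have := hc.tendsto.comp hm
    rwa [Li2_zero] at this
  -- limit of third term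
  have hC : Tendsto (fun y : ℝ => Real.log y * Real.log (1-y))
      (nhdsWithin 1 (Iio 1)) (nhds 0) := by
    have T1 : Tendsto (fun y : ℝ => Real.log y / (y-1)) (nhdsWithin 1 (Iio 1)) (nhds 1) := by
      have h := hasDerivAt_iff_tendsto_slope.mp (Real.hasDerivAt_log one_ne_zero)
      rw [inv_one] at h
      have h2 := h.mono_left (nhdsWithin_mono 1 (fun y (hy : y ∈ Iio 1) => ne_of_lt hy))
      apply h2.congr
      intro y
      simp [slope_def_field, Real.log_one]
    have T2 : Tendsto (fun y : ℝ => (y-1) * Real.log (1-y)) (nhdsWithin 1 (Iio 1)) (nhds 0) := by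
      have base : Tendsto (fun u : ℝ => Real.log u * u) (nhdsWithin 0 (Ioi 0)) (nhds 0) := by
        simpa [Real.rpow_one] using tendsto_log_mul_rpow_nhdsGT_zero one_pos
      have hmap : Tendsto (fun y : ℝ => 1-y) (nhdsWithin 1 (Iio 1)) (nhdsWithin 0 (Ioi 0)) := by
        rw [tendsto_nhdsWithin_iff]
        constructor
        · have h := ((continuous_const (y := (1:ℝ))).sub continuous_id).tendsto (1:ℝ)
          simp only [Pi.sub_apply, id_eq, sub_self] at h
          exact h.mono_left nhdsWithin_le_nhds
        · filter_upwards [self_mem_nhdsWithin] with y hy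
          exact sub_pos.mpr (mem_Iio.mp hy)
      have hcomp := base.comp hmap
      have : (fun y : ℝ => (y-1) * Real.log (1-y))
          = fun y : ℝ => -((fun u : ℝ => Real.log u * u) ((fun y : ℝ => 1-y) y)) := by
        funext y; simp; ring
      rw [this]
      simpa using hcomp.neg
    have hprod := T1.mul T2
    rw [one_mul] at hprod
    apply hprod.congr'
    filter_upwards [self_mem_nhdsWithin] with y hy
    have : y - 1 ≠ 0 := sub_ne_zero.mpr (ne_of_lt hy)
    field_simp
  have hsum := (hA.add hB).add hC
  rw [add_zero, add_zero] at hsum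
  -- R is constant on Ioo 0 1
  have hev : (fun y => Li2 y + Li2 (1-y) + Real.log y * Real.log (1-y))
      =ᶠ[nhdsWithin 1 (Iio 1)]
      (fun _ => Li2 x + Li2 (1-x) + Real.log x * Real.log (1-x)) := by
    filter_upwards [Ioo_mem_nhdsLT_of_mem hmem] with y hy
    exact reflection_aux y hy x hx
  have hconst := hsum.congr' hev
  exact (tendsto_nhds_unique tendsto_const_nhds hconst).symm ▸ rfl

theorem rogersL_neg_golden (φ : ℝ) (hφ : φ = (1 + Real.sqrt 5) / 2) :
    rogersL (-(1 / φ)) = -(π ^ 2 / 15) ∧ rogersL (-φ) = -(π ^ 2 / 10) := by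
  have h5 : Real.sqrt 5 ^ 2 = 5 := Real.sq_sqrt (by norm_num)
  have h5nn : 0 ≤ Real.sqrt 5 := Real.sqrt_nonneg 5
  have hφ1 : 1 < φ := by rw [hφ]; nlinarith
  have hφ2 : φ < 2 := by rw [hφ]; nlinarith
  have hsq : φ^2 = φ + 1 := by rw [hφ]; linear_combination h5/4
  have hφ0 : 0 < φ := by linarith
  have hφne : φ ≠ 0 := ne_of_gt hφ0
  have hinv0 : 0 < 1/φ := by positivity
  have hinv1 : 1/φ < 1 := by rw [div_lt_one hφ0]; linarith
  -- algebraic identities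
  have id1 : 1 - 1/φ = 1/φ^2 := by
    rw [eq_div_iff (by positivity)]
    field_simp
    linear_combination hsq
  have id2 : 1 + 1/φ = φ := by
    field_simp
    linear_combination (-1 : ℝ) * hsq
  have id3 : (1:ℝ) + φ = φ^2 := by linarith
  have id4 : (1/φ)/((1/φ) - 1) = -φ := by
    rw [div_eq_iff (sub_ne_zero.mpr (ne_of_lt hinv1))]
    field_simp
    linear_combination (-1 : ℝ) * hsq
  have id5 : (-(1/φ))/((-(1/φ)) - 1) = 1/φ^2 := by
    rw [div_eq_iff (ne_of_lt (by linarith : -(1/φ) - 1 < 0))]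
    field_simp
    linear_combination (-1 : ℝ) * hsq
  set a := Real.log φ with ha
  have hlog_inv : Real.log (1/φ) = -a := by rw [one_div, Real.log_inv]
  have hlog_inv2 : Real.log (1/φ^2) = -(2*a) := by
    rw [one_div, Real.log_inv, Real.log_pow]
    push_cast
    ring
  have E1 := landen hinv1
  rw [id4, id1, hlog_inv2] at E1
  have E2 := landen (show -(1/φ) < 1 by linarith)
  rw [id5, show (1 : ℝ) - -(1/φ) = 1 + 1/φ by ring, id2] at E2
  have E3 := duplication (show 1/φ ∈ Ioo (-1:ℝ) 1 from ⟨by linarith, hinv1⟩)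
  rw [show (1/φ)^2 = 1/φ^2 by rw [div_pow]; norm_num] at E3
  have E4 := reflection_eq (show 1/φ ∈ Ioo (0:ℝ) 1 from ⟨hinv0, hinv1⟩)
  rw [id1, hlog_inv, hlog_inv2] at E4
  have habs1 : Real.log |(-(1/φ))| = -a := by rw [abs_neg, abs_of_pos hinv0, hlog_inv]
  have habs2 : Real.log |(-φ)| = a := by rw [abs_neg, abs_of_pos hφ0]
  constructor
  · show Li2 (-(1/φ)) + 1/2 * Real.log |(-(1/φ))| * Real.log (1 - -(1/φ)) = -(π^2/15)
    rw [habs1, show (1:ℝ) - -(1/φ) = 1 + 1/φ by ring, id2]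
    ring_nf
    ring_nf at E1 E2 E3 E4
    linarith [E1, E2, E3, E4]
  · show Li2 (-φ) + 1/2 * Real.log |(-φ)| * Real.log (1 - -φ) = -(π^2/10)
    rw [habs2, show (1:ℝ) - -φ = φ^2 by linarith, Real.log_pow]
    push_cast
    ring_nf
    ring_nf at E1 E2 E3 E4
    linarith [E1, E2, E3, E4]
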